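/- Let γ, ρ, α_s, α_l, k_s, k_l, q₀ be positive real constants and T₀ a real constant. The function F : (0,∞) → ℝ defined by F(x) = T₀ + (γρα_l/k_l) · Q((√α_s/√α_l) x) − (q₀/k_l)·√(α_l π)· e^{−x²} · F₁((√α_s/√α_l) x) is strictly increasing on (0,∞), with F(x) → T₀ − (q₀/k_l)√(π α_l) as x → 0⁺ and F(x) → T₀ + γρα_l/k_l as x → +∞. -/

import Mathlib

open Real Filter Set

/-- Gauss error function `erf x = (2/√π) ∫₀ˣ e^{−t²} dt`. -/
noncomputable def erf (x : ℝ) : ℝ := (2 / Real.sqrt π) * ∫ t in (0:ℝ)..x, Real.exp (-t ^ 2)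

/-- Complementary error function. -/
noncomputable def erfc (x : ℝ) : ℝ := 1 - erf x

/-- `Q(x) = √π · x · e^{x²} · erfc(x)`. -/
noncomputable def Qf (x : ℝ) : ℝ := Real.sqrt π * x * Real.exp (x ^ 2) * erfc x

/-- `F₁(x) = erfc(x) · e^{x²}`. -/
noncomputable def F1f (x : ℝ) : ℝ := erfc x * Real.exp (x ^ 2)

/-- `F(x) = T₀ + (γρα_l/k_l)·Q((√α_s/√α_l)x) − (q₀/k_l)·√(α_l π)·e^{−x²}·F₁((√α_s/√α_l)x)`. -/
noncomputable def Ff (γ ρ αs αl kl q₀ T₀ : ℝ) (x : ℝ) : ℝ :=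
  T₀ + (γ * ρ * αl / kl) * Qf ((Real.sqrt αs / Real.sqrt αl) * x)
    - (q₀ / kl) * Real.sqrt (αl * π) * Real.exp (-x ^ 2)
        * F1f ((Real.sqrt αs / Real.sqrt αl) * x)

section Aux
open MeasureTheory

noncomputable def gInt (y : ℝ) : ℝ := ∫ t in Set.Ioi y, Real.exp (-t ^ 2)

lemma integrable_gauss : MeasureTheory.Integrable (fun t : ℝ => Real.exp (-t ^ 2)) := by
  have h := integrable_exp_neg_mul_sq (b := 1) one_pos
  simpa using h

lemma gauss_cont : Continuous fun t : ℝ => Real.exp (-t ^ 2) := by continuity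

lemma gInt_zero : gInt 0 = Real.sqrt π / 2 := by
  have h := integral_gaussian_Ioi 1
  simpa [gInt] using h

lemma gInt_eq (y : ℝ) :
    gInt y = Real.sqrt π / 2 - ∫ t in (0:ℝ)..y, Real.exp (-t ^ 2) := by
  rcases le_or_gt 0 y with hy | hy
  · have hsplit : (∫ t in Set.Ioi (0:ℝ), Real.exp (-t ^ 2))
        = (∫ t in Set.Ioc (0:ℝ) y, Real.exp (-t ^ 2)) + ∫ t in Set.Ioi y, Real.exp (-t ^ 2) := by
      rw [← MeasureTheory.setIntegral_union (Set.Ioc_disjoint_Ioi le_rfl) measurableSet_Ioi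
        integrable_gauss.integrableOn integrable_gauss.integrableOn,
        Set.Ioc_union_Ioi_eq_Ioi hy]
    have h0 : (∫ t in Set.Ioi (0:ℝ), Real.exp (-t ^ 2)) = Real.sqrt π / 2 := gInt_zero
    rw [intervalIntegral.integral_of_le hy]
    unfold gInt
    linarith [hsplit, h0]
  · have hsplit : (∫ t in Set.Ioi y, Real.exp (-t ^ 2))
        = (∫ t in Set.Ioc y 0, Real.exp (-t ^ 2)) + ∫ t in Set.Ioi (0:ℝ), Real.exp (-t ^ 2) := by
      rw [← MeasureTheory.setIntegral_union (Set.Ioc_disjoint_Ioi le_rfl) measurableSet_Ioi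
        integrable_gauss.integrableOn integrable_gauss.integrableOn,
        Set.Ioc_union_Ioi_eq_Ioi hy.le]
    have h0 : (∫ t in Set.Ioi (0:ℝ), Real.exp (-t ^ 2)) = Real.sqrt π / 2 := gInt_zero
    rw [intervalIntegral.integral_symm, intervalIntegral.integral_of_le hy.le]
    unfold gInt
    linarith [hsplit, h0]

lemma hasDerivAt_gInt (y : ℝ) : HasDerivAt gInt (-Real.exp (-y ^ 2)) y := by
  have h : HasDerivAt (fun u => ∫ t in (0:ℝ)..u, Real.exp (-t ^ 2)) (Real.exp (-y ^ 2)) y :=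
    intervalIntegral.integral_hasDerivAt_right integrable_gauss.intervalIntegrable
      gauss_cont.aestronglyMeasurable.stronglyMeasurableAtFilter gauss_cont.continuousAt
  have := (hasDerivAt_const y (Real.sqrt π / 2)).sub h
  simp only [zero_sub] at this
  exact this.congr_of_eventuallyEq (Eventually.of_forall fun x => gInt_eq x)

lemma gInt_pos (y : ℝ) : 0 < gInt y := by
  unfold gInt
  rw [MeasureTheory.setIntegral_pos_iff_support_of_nonneg_ae]
  · have : (Function.support fun t : ℝ => Real.exp (-t ^ 2)) = Set.univ := by
      ext t; simp [Function.support, (Real.exp_pos _).ne']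
    rw [this, Set.univ_inter]
    simp [Real.volume_Ioi]
  · exact Eventually.of_forall fun t => (Real.exp_pos _).le
  · exact integrable_gauss.integrableOn

lemma gInt_tendsto_zero : Tendsto gInt atTop (nhds 0) := by
  have h := MeasureTheory.intervalIntegral_tendsto_integral_Ioi (0:ℝ)
    (f := fun t => Real.exp (-t ^ 2)) integrable_gauss.integrableOn tendsto_id
  have : Tendsto (fun y => Real.sqrt π / 2 - ∫ t in (0:ℝ)..y, Real.exp (-t ^ 2)) atTop
      (nhds (Real.sqrt π / 2 - ∫ t in Set.Ioi (0:ℝ), Real.exp (-t ^ 2))) :=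
    tendsto_const_nhds.sub h
  rw [show (∫ t in Set.Ioi (0:ℝ), Real.exp (-t ^ 2)) = Real.sqrt π / 2 from gInt_zero] at this
  rw [sub_self] at this
  exact this.congr fun y => (gInt_eq y).symm

/-- If `g` has negative derivative on `[a, ∞)` and tends to `0` at `∞`, then `g a > 0`. -/
lemma pos_of_deriv_neg_tendsto_zero {g g' : ℝ → ℝ} {a : ℝ}
    (hd : ∀ y, a ≤ y → HasDerivAt g (g' y) y) (hneg : ∀ y, a ≤ y → g' y < 0)
    (hlim : Tendsto g atTop (nhds 0)) : 0 < g a := by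
  have hanti : StrictAntiOn g (Set.Ici a) := by
    apply strictAntiOn_of_deriv_neg (convex_Ici a)
    · exact fun x hx => ((hd x hx).continuousAt.continuousWithinAt)
    · intro x hx
      rw [interior_Ici] at hx
      rw [(hd x hx.le).deriv]
      exact hneg x hx.le
  have h1 : g (a + 1) < g a := hanti (Set.self_mem_Ici) (by simp : a + 1 ∈ Set.Ici a) (by linarith)
  have h2 : 0 ≤ g (a + 1) := by
    apply le_of_tendsto hlim
    filter_upwards [eventually_ge_atTop (a + 1)] with z hz
    rcases eq_or_lt_of_le hz with h | h
    · rw [← h]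
    · exact (hanti (by simp : a + 1 ∈ Set.Ici a) (by simp; linarith : z ∈ Set.Ici a) h).le
  linarith

lemma tendsto_exp_neg_sq : Tendsto (fun z : ℝ => Real.exp (-z ^ 2)) atTop (nhds 0) := by
  apply Real.tendsto_exp_atBot.comp
  have h : Tendsto (fun z : ℝ => z ^ 2) atTop atTop := tendsto_pow_atTop two_ne_zero
  exact tendsto_neg_atBot_iff.mpr h

lemma tendsto_aux1 : Tendsto (fun z : ℝ => Real.exp (-z ^ 2) / (2 * z)) atTop (nhds 0) := by
  have h2 : Tendsto (fun z : ℝ => (2 * z)⁻¹) atTop (nhds 0) :=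
    tendsto_inv_atTop_zero.comp (tendsto_id.const_mul_atTop two_pos)
  have := tendsto_exp_neg_sq.mul h2
  rw [zero_mul] at this
  exact this.congr fun z => (div_eq_mul_inv _ _).symm

/-- Upper bound: `gInt y < exp(-y²)/(2y)` for `y > 0`. -/
lemma gInt_lt {y : ℝ} (hy : 0 < y) : gInt y < Real.exp (-y ^ 2) / (2 * y) := by
  have key : 0 < Real.exp (-y ^ 2) / (2 * y) - gInt y := by
    apply pos_of_deriv_neg_tendsto_zero
      (g := fun z => Real.exp (-z ^ 2) / (2 * z) - gInt z)
      (g' := fun z => -(Real.exp (-z ^ 2) / (2 * z ^ 2)))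
    · intro z hz
      have hz0 : 0 < z := lt_of_lt_of_le hy hz
      have h1 : HasDerivAt (fun u : ℝ => Real.exp (-u ^ 2))
          (Real.exp (-z ^ 2) * -(2 * z)) z := by
        have hp : HasDerivAt (fun u : ℝ => -u ^ 2) (-(2 * z)) z := by
          exact ((hasDerivAt_pow 2 z).neg).congr_deriv (by norm_num)
        exact hp.exp
      have h2 : HasDerivAt (fun u : ℝ => 2 * u) 2 z := by
        simpa using (hasDerivAt_id z).const_mul 2
      have hdiv := h1.div h2 (by positivity)
      have := hdiv.sub (hasDerivAt_gInt z)
      refine this.congr_deriv ?_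
      field_simp
      ring
    · intro z hz
      have hz0 : 0 < z := lt_of_lt_of_le hy hz
      have : 0 < Real.exp (-z ^ 2) / (2 * z ^ 2) := by positivity
      linarith
    · have := tendsto_aux1.sub gInt_tendsto_zero
      rw [sub_zero] at this
      exact this
  linarith

lemma tendsto_aux2 : Tendsto (fun z : ℝ => z * Real.exp (-z ^ 2) / (1 + 2 * z ^ 2))
    atTop (nhds 0) := by
  apply squeeze_zero' (g := fun z : ℝ => Real.exp (-z ^ 2))
  · filter_upwards [eventually_ge_atTop (0:ℝ)] with z hz
    positivity
  · filter_upwards [eventually_ge_atTop (0:ℝ)] with z hz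
    rw [div_le_iff₀ (by positivity)]
    nlinarith [Real.exp_pos (-z ^ 2), sq_nonneg (z - 1)]
  · exact tendsto_exp_neg_sq

/-- Lower bound: `gInt y > y·exp(-y²)/(1+2y²)` for `y > 0`. -/
lemma gInt_gt {y : ℝ} (hy : 0 < y) :
    y * Real.exp (-y ^ 2) / (1 + 2 * y ^ 2) < gInt y := by
  have key : 0 < gInt y - y * Real.exp (-y ^ 2) / (1 + 2 * y ^ 2) := by
    apply pos_of_deriv_neg_tendsto_zero
      (g := fun z => gInt z - z * Real.exp (-z ^ 2) / (1 + 2 * z ^ 2))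
      (g' := fun z => -(2 * Real.exp (-z ^ 2) / (1 + 2 * z ^ 2) ^ 2))
    · intro z hz
      have h1 : HasDerivAt (fun u : ℝ => Real.exp (-u ^ 2))
          (Real.exp (-z ^ 2) * -(2 * z)) z := by
        have hp : HasDerivAt (fun u : ℝ => -u ^ 2) (-(2 * z)) z := by
          exact ((hasDerivAt_pow 2 z).neg).congr_deriv (by norm_num)
        exact hp.exp
      have hn : HasDerivAt (fun u : ℝ => u * Real.exp (-u ^ 2))
          (1 * Real.exp (-z ^ 2) + z * (Real.exp (-z ^ 2) * -(2 * z))) z :=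
        (hasDerivAt_id z).mul h1
      have hd : HasDerivAt (fun u : ℝ => 1 + 2 * u ^ 2) (2 * (2 * z)) z := by
        simpa using ((hasDerivAt_pow 2 z).const_mul 2).const_add 1
      have hdiv := hn.div hd (by positivity)
      have := (hasDerivAt_gInt z).sub hdiv
      refine this.congr_deriv ?_
      field_simp
      ring
    · intro z hz
      have : 0 < 2 * Real.exp (-z ^ 2) / (1 + 2 * z ^ 2) ^ 2 := by positivity
      linarith
    · have := gInt_tendsto_zero.sub tendsto_aux2
      rw [sub_zero] at this
      exact this
  linarith

lemma exp_mul_exp_neg (y : ℝ) : Real.exp (-y ^ 2) * Real.exp (y ^ 2) = 1 := by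
  rw [← Real.exp_add]; simp

lemma erfc_eq (y : ℝ) : erfc y = (2 / Real.sqrt π) * gInt y := by
  have hπ : Real.sqrt π ≠ 0 := (Real.sqrt_pos.mpr Real.pi_pos).ne'
  rw [erfc, erf, gInt_eq y, mul_sub]
  field_simp

lemma Qf_eq (y : ℝ) : Qf y = 2 * (y * Real.exp (y ^ 2) * gInt y) := by
  have hπ : Real.sqrt π ≠ 0 := (Real.sqrt_pos.mpr Real.pi_pos).ne'
  rw [Qf, erfc_eq]
  field_simp

lemma F1f_eq (y : ℝ) : F1f y = (2 / Real.sqrt π) * (Real.exp (y ^ 2) * gInt y) := by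
  rw [F1f, erfc_eq]; ring

lemma Ff_eq (γ ρ αs αl kl q₀ T₀ x : ℝ) :
    Ff γ ρ αs αl kl q₀ T₀ x =
      T₀ + (2 * (γ * ρ * αl / kl)) *
          ((Real.sqrt αs / Real.sqrt αl) * x *
            Real.exp (((Real.sqrt αs / Real.sqrt αl) * x) ^ 2) *
            gInt ((Real.sqrt αs / Real.sqrt αl) * x))
        - ((q₀ / kl) * Real.sqrt (αl * π) * (2 / Real.sqrt π)) *
          (Real.exp (-x ^ 2) * Real.exp (((Real.sqrt αs / Real.sqrt αl) * x) ^ 2) *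
            gInt ((Real.sqrt αs / Real.sqrt αl) * x)) := by
  rw [Ff, Qf_eq, F1f_eq]; ring

lemma hasDerivAt_u (c x : ℝ) :
    HasDerivAt (fun x : ℝ => c * x * Real.exp ((c * x) ^ 2) * gInt (c * x))
      (c * ((1 + 2 * (c * x) ^ 2) * Real.exp ((c * x) ^ 2) * gInt (c * x) - c * x)) x := by
  have hy : HasDerivAt (fun x : ℝ => c * x) c x := by
    simpa using (hasDerivAt_id x).const_mul c
  have hsq : HasDerivAt (fun x : ℝ => (c * x) ^ 2) (2 * (c * x) * c) x := by
    exact (hy.pow 2).congr_deriv (by simp)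
  have he : HasDerivAt (fun x : ℝ => Real.exp ((c * x) ^ 2))
      (Real.exp ((c * x) ^ 2) * (2 * (c * x) * c)) x := hsq.exp
  have hg : HasDerivAt (fun x : ℝ => gInt (c * x)) (-Real.exp (-(c * x) ^ 2) * c) x := by
    exact (hasDerivAt_gInt (c * x)).comp x hy
  have h := (hy.mul he).mul hg
  refine h.congr_deriv ?_
  simp only [Pi.mul_apply]
  have hid := exp_mul_exp_neg (c * x)
  linear_combination (-(c * (c * x))) * hid

lemma hasDerivAt_v (c x : ℝ) :
    HasDerivAt (fun x : ℝ => Real.exp (-x ^ 2) * Real.exp ((c * x) ^ 2) * gInt (c * x))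
      (2 * x * (c ^ 2 - 1) * (Real.exp (-x ^ 2) * Real.exp ((c * x) ^ 2)) * gInt (c * x)
        - c * Real.exp (-x ^ 2)) x := by
  have hy : HasDerivAt (fun x : ℝ => c * x) c x := by
    simpa using (hasDerivAt_id x).const_mul c
  have hsq : HasDerivAt (fun x : ℝ => (c * x) ^ 2) (2 * (c * x) * c) x := by
    exact (hy.pow 2).congr_deriv (by simp)
  have he : HasDerivAt (fun x : ℝ => Real.exp ((c * x) ^ 2))
      (Real.exp ((c * x) ^ 2) * (2 * (c * x) * c)) x := hsq.exp
  have hg : HasDerivAt (fun x : ℝ => gInt (c * x)) (-Real.exp (-(c * x) ^ 2) * c) x := by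
    exact (hasDerivAt_gInt (c * x)).comp x hy
  have hex : HasDerivAt (fun x : ℝ => Real.exp (-x ^ 2)) (Real.exp (-x ^ 2) * -(2 * x)) x := by
    have hp : HasDerivAt (fun u : ℝ => -u ^ 2) (-(2 * x)) x := by
      exact ((hasDerivAt_pow 2 x).neg).congr_deriv (by norm_num)
    exact hp.exp
  have h := (hex.mul he).mul hg
  refine h.congr_deriv ?_
  simp only [Pi.mul_apply]
  have hid := exp_mul_exp_neg (c * x)
  linear_combination (-(c * Real.exp (-x ^ 2))) * hid

lemma key1 {y : ℝ} (hy : 0 < y) : y < (1 + 2 * y ^ 2) * Real.exp (y ^ 2) * gInt y := by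
  have h1p : (0:ℝ) < 1 + 2 * y ^ 2 := by positivity
  have hE : 0 < Real.exp (y ^ 2) := Real.exp_pos _
  have h' : y * Real.exp (-y ^ 2) < gInt y * (1 + 2 * y ^ 2) := by
    have := gInt_gt hy
    rw [div_lt_iff₀ h1p] at this
    linarith
  calc y = y * (Real.exp (-y ^ 2) * Real.exp (y ^ 2)) := by rw [exp_mul_exp_neg, mul_one]
    _ = (y * Real.exp (-y ^ 2)) * Real.exp (y ^ 2) := by ring
    _ < (gInt y * (1 + 2 * y ^ 2)) * Real.exp (y ^ 2) := mul_lt_mul_of_pos_right h' hE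
    _ = (1 + 2 * y ^ 2) * Real.exp (y ^ 2) * gInt y := by ring

lemma key2 {y : ℝ} (hy : 0 < y) : y * Real.exp (y ^ 2) * gInt y < 1 / 2 := by
  have hE : 0 < Real.exp (y ^ 2) := Real.exp_pos _
  have h12 : y * Real.exp (y ^ 2) * (Real.exp (-y ^ 2) / (2 * y)) = 1 / 2 := by
    rw [Real.exp_neg]
    field_simp
  calc y * Real.exp (y ^ 2) * gInt y
      < y * Real.exp (y ^ 2) * (Real.exp (-y ^ 2) / (2 * y)) :=
        mul_lt_mul_of_pos_left (gInt_lt hy) (by positivity)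
    _ = 1 / 2 := h12

lemma term1_pos {c x : ℝ} (hc : 0 < c) (hx : 0 < x) :
    0 < c * ((1 + 2 * (c * x) ^ 2) * Real.exp ((c * x) ^ 2) * gInt (c * x) - c * x) := by
  have hy : 0 < c * x := mul_pos hc hx
  have := key1 hy
  apply mul_pos hc
  linarith

lemma term2_neg {c x : ℝ} (hc : 0 < c) (hx : 0 < x) :
    2 * x * (c ^ 2 - 1) * (Real.exp (-x ^ 2) * Real.exp ((c * x) ^ 2)) * gInt (c * x)
      - c * Real.exp (-x ^ 2) < 0 := by
  set y := c * x with hyx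
  have hy : 0 < y := mul_pos hc hx
  have hEx : 0 < Real.exp (-x ^ 2) := Real.exp_pos _
  have hEy : 0 < Real.exp (y ^ 2) := Real.exp_pos _
  have hg : 0 < gInt y := gInt_pos y
  rcases le_or_gt (c ^ 2) 1 with h | h
  · have h1 : 2 * x * (c ^ 2 - 1) ≤ 0 := by nlinarith
    have h2 : 0 < (Real.exp (-x ^ 2) * Real.exp (y ^ 2)) * gInt y :=
      mul_pos (mul_pos hEx hEy) hg
    have h3 := mul_nonpos_of_nonpos_of_nonneg h1 h2.le
    nlinarith [mul_pos hc hEx]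
  · have hlt := gInt_lt hy
    have key : (2 * x * (c ^ 2 - 1) * (Real.exp (-x ^ 2) * Real.exp (y ^ 2)) * gInt y) * y
        < (c * Real.exp (-x ^ 2)) * y := by
      have hP : 0 < x * (c ^ 2 - 1) * (Real.exp (-x ^ 2) * Real.exp (y ^ 2)) :=
        mul_pos (mul_pos hx (sub_pos.mpr h)) (mul_pos hEx hEy)
      have h' : gInt y * (2 * y) < Real.exp (-y ^ 2) := by
        rw [← lt_div_iff₀ (by positivity)]
        exact hlt
      have h6 := mul_lt_mul_of_pos_left h' hP
      have h7 : x * (c ^ 2 - 1) * (Real.exp (-x ^ 2) * Real.exp (y ^ 2)) * Real.exp (-y ^ 2)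
          = x * (c ^ 2 - 1) * Real.exp (-x ^ 2) := by
        linear_combination (x * (c ^ 2 - 1) * Real.exp (-x ^ 2)) * exp_mul_exp_neg y
      have h8 : x * (c ^ 2 - 1) * Real.exp (-x ^ 2) < c * Real.exp (-x ^ 2) * y := by
        rw [hyx]
        nlinarith [mul_pos hx hEx]
      nlinarith [h6, h7, h8]
    have := (mul_lt_mul_iff_of_pos_right hy).mp key
    linarith

lemma v_lt {c x : ℝ} (hc : 0 < c) (hx : 0 < x) :
    Real.exp (-x ^ 2) * Real.exp ((c * x) ^ 2) * gInt (c * x)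
      ≤ Real.exp (-x ^ 2) / (2 * (c * x)) := by
  set y := c * x with hyx
  have hy : 0 < y := mul_pos hc hx
  have hEx : 0 < Real.exp (-x ^ 2) := Real.exp_pos _
  have hEy : 0 < Real.exp (y ^ 2) := Real.exp_pos _
  have h12 : Real.exp (-x ^ 2) * Real.exp (y ^ 2) * (Real.exp (-y ^ 2) / (2 * y))
      = Real.exp (-x ^ 2) / (2 * y) := by
    rw [Real.exp_neg (y ^ 2)]
    field_simp
  calc Real.exp (-x ^ 2) * Real.exp (y ^ 2) * gInt y
      ≤ Real.exp (-x ^ 2) * Real.exp (y ^ 2) * (Real.exp (-y ^ 2) / (2 * y)) :=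
        (mul_le_mul_of_nonneg_left (gInt_lt hy).le (by positivity))
    _ = Real.exp (-x ^ 2) / (2 * y) := h12

lemma u_lower {c x : ℝ} (hc : 0 < c) (hx : 0 < x) :
    (c * x) ^ 2 / (1 + 2 * (c * x) ^ 2)
      ≤ c * x * Real.exp ((c * x) ^ 2) * gInt (c * x) := by
  set y := c * x with hyx
  have hy : 0 < y := mul_pos hc hx
  rw [div_le_iff₀ (by positivity)]
  nlinarith [mul_lt_mul_of_pos_left (key1 hy) hy]

end Aux

/-- `F` is strictly increasing on `(0,∞)`, with `F(x) → T₀ − (q₀/k_l)√(π α_l)` as `x → 0⁺`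
and `F(x) → T₀ + γρα_l/k_l` as `x → +∞`. -/
theorem Ff_strictMonoOn_limits (γ ρ αs αl ks kl q₀ T₀ : ℝ)
    (hγ : 0 < γ) (hρ : 0 < ρ) (hαs : 0 < αs) (hαl : 0 < αl)
    (hks : 0 < ks) (hkl : 0 < kl) (hq₀ : 0 < q₀) :
    StrictMonoOn (Ff γ ρ αs αl kl q₀ T₀) (Set.Ioi (0 : ℝ)) ∧
    Tendsto (Ff γ ρ αs αl kl q₀ T₀) (nhdsWithin 0 (Set.Ioi 0))
      (nhds (T₀ - (q₀ / kl) * Real.sqrt (π * αl))) ∧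
    Tendsto (Ff γ ρ αs αl kl q₀ T₀) atTop (nhds (T₀ + γ * ρ * αl / kl)) := by
  have hc : 0 < Real.sqrt αs / Real.sqrt αl :=
    div_pos (Real.sqrt_pos.mpr hαs) (Real.sqrt_pos.mpr hαl)
  set c := Real.sqrt αs / Real.sqrt αl with hcdef
  have hA : 0 < γ * ρ * αl / kl := by positivity
  set A := γ * ρ * αl / kl with hAdef
  have hK : 0 < (q₀ / kl) * Real.sqrt (αl * π) * (2 / Real.sqrt π) := by
    have h1 : 0 < Real.sqrt (αl * π) := Real.sqrt_pos.mpr (by positivity)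
    have h2 : 0 < Real.sqrt π := Real.sqrt_pos.mpr Real.pi_pos
    positivity
  set K := (q₀ / kl) * Real.sqrt (αl * π) * (2 / Real.sqrt π) with hKdef
  have hFeq : ∀ z : ℝ, Ff γ ρ αs αl kl q₀ T₀ z =
      T₀ + 2 * A * (c * z * Real.exp ((c * z) ^ 2) * gInt (c * z))
        - K * (Real.exp (-z ^ 2) * Real.exp ((c * z) ^ 2) * gInt (c * z)) := by
    intro z
    simp only [hcdef, hAdef, hKdef]
    rw [Ff_eq]
  have hD : ∀ x : ℝ, HasDerivAt (Ff γ ρ αs αl kl q₀ T₀)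
      (2 * A * (c * ((1 + 2 * (c * x) ^ 2) * Real.exp ((c * x) ^ 2) * gInt (c * x) - c * x))
        - K * (2 * x * (c ^ 2 - 1) * (Real.exp (-x ^ 2) * Real.exp ((c * x) ^ 2)) * gInt (c * x)
            - c * Real.exp (-x ^ 2))) x := by
    intro x
    have h := (((hasDerivAt_u c x).const_mul (2 * A)).const_add T₀).sub
      ((hasDerivAt_v c x).const_mul K)
    exact h.congr_of_eventuallyEq (Eventually.of_forall fun z => hFeq z)
  refine ⟨?_, ?_, ?_⟩
  · apply strictMonoOn_of_deriv_pos (convex_Ioi 0)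
    · exact fun x _ => (hD x).continuousAt.continuousWithinAt
    · intro x hx
      rw [interior_Ioi] at hx
      rw [(hD x).deriv]
      have t1 := term1_pos hc hx
      have t2 := term2_neg hc hx
      nlinarith [mul_pos (by positivity : (0:ℝ) < 2 * A) t1,
        mul_pos hK (neg_pos.mpr t2)]
  · have h0 : Ff γ ρ αs αl kl q₀ T₀ 0 = T₀ - q₀ / kl * Real.sqrt (π * αl) := by
      rw [Ff]
      simp [Qf, F1f, erfc, erf, mul_comm αl π]
    have hcont : ContinuousAt (Ff γ ρ αs αl kl q₀ T₀) 0 := (hD 0).continuousAt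
    have h := hcont.continuousWithinAt (s := Set.Ioi 0)
    rw [ContinuousWithinAt, h0] at h
    exact h
  · have hsq : Tendsto (fun x : ℝ => (c * x) ^ 2) atTop atTop :=
      (tendsto_pow_atTop two_ne_zero).comp
        ((tendsto_id.const_mul_atTop hc).congr fun x => rfl)
    have hu : Tendsto (fun x : ℝ => c * x * Real.exp ((c * x) ^ 2) * gInt (c * x))
        atTop (nhds (1 / 2)) := by
      have h1 : Tendsto (fun t : ℝ => t / (1 + 2 * t)) atTop (nhds (1 / 2)) := by
        have h2 : Tendsto (fun t : ℝ => (t⁻¹ + 2)⁻¹) atTop (nhds ((0 + 2)⁻¹)) :=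
          (tendsto_inv_atTop_zero.add tendsto_const_nhds).inv₀ (by norm_num)
        rw [show ((0:ℝ) + 2)⁻¹ = 1 / 2 by norm_num] at h2
        apply h2.congr'
        filter_upwards [eventually_gt_atTop (0:ℝ)] with t ht
        field_simp
      have hlow : Tendsto (fun x : ℝ => (c * x) ^ 2 / (1 + 2 * (c * x) ^ 2))
          atTop (nhds (1 / 2)) := h1.comp hsq
      apply tendsto_of_tendsto_of_tendsto_of_le_of_le' hlow tendsto_const_nhds
      · filter_upwards [eventually_gt_atTop (0:ℝ)] with x hx
        exact u_lower hc hx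
      · filter_upwards [eventually_gt_atTop (0:ℝ)] with x hx
        exact (key2 (mul_pos hc hx)).le
    have hv : Tendsto (fun x : ℝ => Real.exp (-x ^ 2) * Real.exp ((c * x) ^ 2) * gInt (c * x))
        atTop (nhds 0) := by
      apply squeeze_zero' (g := fun x : ℝ => Real.exp (-x ^ 2) / (2 * (c * x)))
      · filter_upwards with x
        exact (mul_pos (mul_pos (Real.exp_pos _) (Real.exp_pos _)) (gInt_pos _)).le
      · filter_upwards [eventually_gt_atTop (0:ℝ)] with x hx
        exact v_lt hc hx
      · have h2 : Tendsto (fun x : ℝ => (2 * (c * x))⁻¹) atTop (nhds 0) := by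
          apply tendsto_inv_atTop_zero.comp
          exact (tendsto_id.const_mul_atTop (by positivity : (0:ℝ) < 2 * c)).congr
            fun x => by simp [mul_assoc]
        have h3 := tendsto_exp_neg_sq.mul h2
        rw [mul_zero] at h3
        exact h3.congr fun x => (div_eq_mul_inv _ _).symm
    have hfinal := ((tendsto_const_nhds : Tendsto (fun _ : ℝ => T₀) atTop (nhds T₀)).add
      (hu.const_mul (2 * A))).sub (hv.const_mul K)
    have heq : T₀ + 2 * A * (1 / 2) - K * 0 = T₀ + γ * ρ * αl / kl := by
      rw [hAdef]; ring
    rw [heq] at hfinal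
    exact hfinal.congr fun x => (hFeq x).symm
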